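/- There is a full and faithful functor G : O → OSet sending a k-opetope α to the opetopic set α̂ whose m-cells are isomorphism classes in the slice category O/α of morphisms x → α from m-opetopes, and sending a morphism h : α → β to postcomposition [(x, f)] ↦ [(x, h ∘ f)]. -/

import Mathlib

open CategoryTheory

variable (𝒪 : Type) [SmallCategory 𝒪] (dim : 𝒪 → ℕ)

/-- An opetopic set over a category `𝒪` of opetopes (graded by dimension `dim`): for each
`k ≥ 0` a set of `k`-cells, each with an underlying `k`-opetope (its shape, i.e. its
frame), and for each face `g : x → shape c` of the shape of a cell `c` a cell labelling
that face (the frame data), compatibly with identities and composition. -/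
structure OpetopicSet where
  cell : ℕ → Type
  shape : ∀ {k : ℕ}, cell k → 𝒪
  dim_shape : ∀ {k : ℕ} (c : cell k), dim (shape c) = k
  face : ∀ {k : ℕ} (c : cell k) {x : 𝒪}, (x ⟶ shape c) → cell (dim x)
  shape_face : ∀ {k : ℕ} (c : cell k) {x : 𝒪} (g : x ⟶ shape c), shape (face c g) = x
  face_id : ∀ {k : ℕ} (c : cell k), HEq (face c (𝟙 (shape c))) c
  face_comp : ∀ {k : ℕ} (c : cell k) {x y : 𝒪} (g : x ⟶ shape c) (h : y ⟶ x),
    face (face c g) (h ≫ eqToHom (shape_face c g).symm) = face c (h ≫ g)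

/-- A morphism of opetopic sets: levelwise functions on cells preserving shapes and
frames (faces). -/
@[ext]
structure OpetopicSetHom (X Y : OpetopicSet 𝒪 dim) where
  app : ∀ k, X.cell k → Y.cell k
  shape_app : ∀ {k : ℕ} (c : X.cell k), Y.shape (app k c) = X.shape c
  face_app : ∀ {k : ℕ} (c : X.cell k) {x : 𝒪} (g : x ⟶ X.shape c),
    app (dim x) (X.face c g) = Y.face (app k c) (g ≫ eqToHom (shape_app c).symm)

/-- The category `OSet` of opetopic sets. -/
instance : Category (OpetopicSet 𝒪 dim) where
  Hom X Y := OpetopicSetHom 𝒪 dim X Y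
  id X :=
    { app := fun _ c => c
      shape_app := fun _ => rfl
      face_app := by intros; simp }
  comp F G :=
    { app := fun k c => G.app k (F.app k c)
      shape_app := by intro k c; rw [G.shape_app, F.shape_app]
      face_app := by
        intro k c x g
        rw [F.face_app, G.face_app]
        congr 1
        simp }
  id_comp F := rfl
  comp_id F := rfl
  assoc F G H := rfl

/-- The realization `α̂` of an opetope `α` as an opetopic set: its `m`-cells are the
`m`-dimensional faces of `α`, i.e. the morphisms `x → α` in `𝒪` from `m`-opetopes `x`
(in particular its `dim α`-cells are just the identity of `α`, and it has no cells above
dimension `dim α`), with frames given by composition of face maps. -/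
def realize (α : 𝒪) : OpetopicSet 𝒪 dim where
  cell m := {p : Σ x : 𝒪, x ⟶ α // dim p.1 = m}
  shape p := p.1.1
  dim_shape p := p.2
  face := fun {k} p {x} g => ⟨⟨x, g ≫ p.1.2⟩, rfl⟩
  shape_face := by intros; rfl
  face_id c := by
    rcases c with ⟨⟨x, f⟩, rfl⟩
    exact heq_of_eq (Subtype.ext (by simp))
  face_comp := by
    intros
    apply Subtype.ext
    simp
    
/-- The realization functor `G : 𝒪 → OSet`, acting on morphisms by postcomposition. -/
def realizeFunctor : 𝒪 ⥤ OpetopicSet 𝒪 dim where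
  obj := realize 𝒪 dim
  map {α β} h :=
    { app := fun m p => ⟨⟨p.1.1, p.1.2 ≫ h⟩, p.2⟩
      shape_app := fun _ => rfl
      face_app := by
        intro m c x g
        apply Subtype.ext
        simp [realize]
        erw [eqToHom_refl, Category.comp_id, Category.assoc] }
  map_id α := by
    apply OpetopicSetHom.ext
    funext m p
    refine Subtype.ext ?_
    show (⟨p.1.1, p.1.2 ≫ 𝟙 α⟩ : Σ x : 𝒪, x ⟶ α) = p.1
    simp
  map_comp {α β δ} h h' := by
    apply OpetopicSetHom.ext
    funext m p
    refine Subtype.ext ?_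
    show (⟨p.1.1, p.1.2 ≫ h ≫ h'⟩ : Σ x : 𝒪, x ⟶ δ)
        = ⟨p.1.1, (p.1.2 ≫ h) ≫ h'⟩
    simp

/-- There is a full and faithful functor `G : 𝒪 → OSet` sending an
opetope `α` to its realization `α̂` and a morphism `h : α → β` to the morphism of opetopic
sets given by postcomposition with `h`. -/
theorem realizeFunctor_full_and_faithful :
    (realizeFunctor 𝒪 dim).Full ∧ (realizeFunctor 𝒪 dim).Faithful := by
  constructor
  · constructor
    intro α β F
    let c : (realize 𝒪 dim α).cell (dim α) := ⟨⟨α, 𝟙 α⟩, rfl⟩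
    let d : (realize 𝒪 dim β).cell (dim α) := F.app (dim α) c
    have hs : (realize 𝒪 dim β).shape d = α := F.shape_app c
    refine ⟨eqToHom hs.symm ≫ d.1.2, ?_⟩
    apply OpetopicSetHom.ext
    funext m p
    obtain ⟨⟨x, g⟩, hm⟩ := p
    subst hm
    have hface : F.app (dim x) ((realize 𝒪 dim α).face c (g ≫ 𝟙 α)) =
        (realize 𝒪 dim β).face (F.app (dim α) c)
          ((g ≫ 𝟙 α) ≫ eqToHom (F.shape_app c).symm) := F.face_app c (g ≫ 𝟙 α)
    have hc : (realize 𝒪 dim α).face c (g ≫ 𝟙 α) = ⟨⟨x, g⟩, rfl⟩ := by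
      apply Subtype.ext
      show (⟨x, (g ≫ 𝟙 α) ≫ 𝟙 α⟩ : Σ y : 𝒪, y ⟶ α) = ⟨x, g⟩
      simp
    rw [hc] at hface
    show _ = F.app (dim x) ⟨⟨x, g⟩, rfl⟩
    rw [hface]
    apply Subtype.ext
    show (⟨x, g ≫ eqToHom hs.symm ≫ d.1.2⟩ : Σ y : 𝒪, y ⟶ β)
        = ⟨x, ((g ≫ 𝟙 α) ≫ eqToHom hs.symm) ≫ d.1.2⟩
    simp
    exact (Category.assoc _ _ _).symm
  · constructor
    intro α β h h' heq
    have h1 : (⟨α, 𝟙 α ≫ h⟩ : Σ x : 𝒪, x ⟶ β) = ⟨α, 𝟙 α ≫ h'⟩ :=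
      congrArg (fun F : OpetopicSetHom 𝒪 dim (realize 𝒪 dim α) (realize 𝒪 dim β) =>
        (F.app (dim α) ⟨⟨α, 𝟙 α⟩, rfl⟩).1) heq
    injection h1 with _ h2
    simpa using h2
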